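/- Let N ∈ ℕ and let T: A⁻ → End(ℂ^N) be a semigroup homomorphism from a commutative semigroup A⁻ into commuting endomorphisms of a finite-dimensional complex vector space. Then there exist functions η₁,…,η_N: A⁻ → ℂ, each multiplicative (η_j(ab) = η_j(a)η_j(b)), such that tr T(a) = Σ_{j=1}^N η_j(a) for all a ∈ A⁻. -/

import Mathlib

open Module LinearMap

set_option maxHeartbeats 1000000
set_option synthInstance.maxHeartbeats 400000

/-- If `p` is a submodule of the maximal generalized `μ`-eigenspace of `f` which is
invariant under `f`, then the trace of `f` restricted to `p` is `finrank p * μ`. -/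
lemma trace_restrict_genEig {V : Type*} [AddCommGroup V] [Module ℂ V] [FiniteDimensional ℂ V]
    (f : Module.End ℂ V) (μ : ℂ) (p : Submodule ℂ V)
    (hle : p ≤ f.maxGenEigenspace μ) (h : Set.MapsTo f p p) :
    LinearMap.trace ℂ p (f.restrict h) = (Module.finrank ℂ p : ℂ) * μ := by
  have h' : Set.MapsTo (f - algebraMap ℂ (Module.End ℂ V) μ) p p := fun x hx => by
    simpa [Module.algebraMap_end_apply] using p.sub_mem (h hx) (p.smul_mem μ hx)
  have hnil : IsNilpotent ((f - algebraMap ℂ (Module.End ℂ V) μ).restrict h') :=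
    Module.End.isNilpotent_restrict_of_le hle
      (f.isNilpotent_restrict_maxGenEigenspace_sub_algebraMap μ)
  have key : f.restrict h =
      (f - algebraMap ℂ (Module.End ℂ V) μ).restrict h' + algebraMap ℂ (Module.End ℂ p) μ := by
    ext x
    show f x = (f - algebraMap ℂ (Module.End ℂ V) μ) x + μ • (x : V)
    simp [LinearMap.restrict_apply, Module.algebraMap_end_apply]
  have h0 : LinearMap.trace ℂ p ((f - algebraMap ℂ (Module.End ℂ V) μ).restrict h') = 0 :=
    IsReduced.eq_zero _ (LinearMap.isNilpotent_trace_of_isNilpotent hnil)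
  rw [key, map_add, h0, zero_add]
  have : algebraMap ℂ (Module.End ℂ p) μ = μ • (1 : Module.End ℂ p) := by
    ext x; simp [Module.algebraMap_end_apply]
  rw [this, map_smul, LinearMap.trace_one, smul_eq_mul, mul_comm]


/-- If `u`, `v` are commuting endomorphisms of a nonzero module such that `u - α`, `v - β` and
`u * v - γ` are all nilpotent, then `γ = α * β`. -/
lemma comm_eigenvalue_mul {M : Type*} [AddCommGroup M] [Module ℂ M] [Nontrivial M]
    (u v : Module.End ℂ M) (huv : Commute u v) (α β γ : ℂ)
    (hu : IsNilpotent (u - algebraMap ℂ (Module.End ℂ M) α))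
    (hv : IsNilpotent (v - algebraMap ℂ (Module.End ℂ M) β))
    (hw : IsNilpotent (u * v - algebraMap ℂ (Module.End ℂ M) γ)) :
    γ = α * β := by
  have hid : u * v - algebraMap ℂ (Module.End ℂ M) (α * β)
      = (u - algebraMap ℂ (Module.End ℂ M) α) * v
        + algebraMap ℂ (Module.End ℂ M) α * (v - algebraMap ℂ (Module.End ℂ M) β) := by
    rw [map_mul, sub_mul, mul_sub, sub_add_sub_cancel]
  have c1 : Commute (u - algebraMap ℂ (Module.End ℂ M) α) v :=
    huv.sub_left (Algebra.commute_algebraMap_left α v)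
  have c2 : Commute (u - algebraMap ℂ (Module.End ℂ M) α)
      (v - algebraMap ℂ (Module.End ℂ M) β) :=
    c1.sub_right (Algebra.commute_algebraMap_left β _).symm
  have c3 : Commute v (v - algebraMap ℂ (Module.End ℂ M) β) :=
    (Commute.refl v).sub_right (Algebra.commute_algebraMap_left β v).symm
  have hnil2 : IsNilpotent (u * v - algebraMap ℂ (Module.End ℂ M) (α * β)) := by
    rw [hid]
    have cA : IsNilpotent ((u - algebraMap ℂ (Module.End ℂ M) α) * v) :=
      c1.isNilpotent_mul_right hu
    have cB : IsNilpotent (algebraMap ℂ (Module.End ℂ M) α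
        * (v - algebraMap ℂ (Module.End ℂ M) β)) :=
      (Algebra.commute_algebraMap_left α _).isNilpotent_mul_left hv
    exact (((Algebra.commute_algebraMap_left α _).symm.mul_right c2).mul_left
      (((Algebra.commute_algebraMap_left α v).symm).mul_right c3)).isNilpotent_add cA cB
  have comm0 : Commute (u * v - algebraMap ℂ (Module.End ℂ M) (α * β))
      (u * v - algebraMap ℂ (Module.End ℂ M) γ) :=
    ((Commute.refl (u * v)).sub_right
      (Algebra.commute_algebraMap_left _ _).symm).sub_left (Algebra.commute_algebraMap_left _ _)
  have hdiff : IsNilpotent (algebraMap ℂ (Module.End ℂ M) (γ - α * β)) := by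
    have h := comm0.isNilpotent_sub hnil2 hw
    rwa [sub_sub_sub_cancel_left, ← map_sub] at h
  obtain ⟨k, hk⟩ := hdiff
  rw [← map_pow] at hk
  have hz : (γ - α * β) ^ k = 0 := by
    apply (algebraMap ℂ (Module.End ℂ M)).injective
    rw [hk, map_zero]
  exact sub_eq_zero.mp (pow_eq_zero_iff'.mp hz).1

/-- Let `T : A⁻ → End(ℂ^N)` be a semigroup homomorphism from a commutative
semigroup `A⁻` into (automatically commuting) endomorphisms of `ℂ^N`.  Then
there exist multiplicative functions `η₁, …, η_N : A⁻ → ℂ` such that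
`tr T(a) = Σ_j η_j(a)` for all `a ∈ A⁻`. -/
theorem stmt10 (N : ℕ) {A : Type*} [CommSemigroup A]
    (T : A → Matrix (Fin N) (Fin N) ℂ)
    (hT : ∀ a b : A, T (a * b) = T a * T b) :
    ∃ η : Fin N → A → ℂ,
      (∀ j, ∀ a b : A, η j (a * b) = η j a * η j b) ∧
      ∀ a : A, (T a).trace = ∑ j, η j a := by
  classical
  set V := (Fin N → ℂ) with hV
  set f : A → Module.End ℂ V := fun a => Matrix.toLin' (T a) with hf
  have hmul : ∀ a b, f (a * b) = f a * f b := by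
    intro a b
    simp only [hf, hT, Matrix.toLin'_mul]
    rfl
  have hcomm : ∀ a b, Commute (f a) (f b) := fun a b => by
    rw [Commute, SemiconjBy, ← hmul, ← hmul, mul_comm a b]
  have htop : ∀ a, ⨆ μ, (f a).maxGenEigenspace μ = ⊤ := fun a =>
    Module.End.iSup_maxGenEigenspace_eq_top (f a)
  set W : (A → ℂ) → Submodule ℂ V := fun χ => ⨅ a, (f a).maxGenEigenspace (χ a) with hW
  have hWsup : ⨆ χ, W χ = ⊤ :=
    Module.End.iSup_iInf_maxGenEigenspace_eq_top_of_iSup_maxGenEigenspace_eq_top_of_commute f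
      (fun a b _ => hcomm a b) htop
  have hWindep : iSupIndep W :=
    Module.End.independent_iInf_maxGenEigenspace_of_forall_mapsTo f
      (fun i j φ => Module.End.mapsTo_maxGenEigenspace_of_comm (hcomm j i) φ)
  have hWmaps : ∀ c χ, Set.MapsTo (f c) (W χ) (W χ) := by
    intro c χ x hx
    simp only [SetLike.mem_coe, hW, Submodule.mem_iInf] at hx ⊢
    exact fun d => Module.End.mapsTo_maxGenEigenspace_of_comm (hcomm d c) (χ d) (hx d)
  have hfin : {χ | W χ ≠ ⊥}.Finite := WellFoundedGT.finite_ne_bot_of_iSupIndep hWindep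
  have internal : DirectSum.IsInternal W :=
    DirectSum.isInternal_submodule_of_iSupIndep_of_iSup_eq_top hWindep hWsup
  -- multiplicativity of eigenvalue-functions with nonzero joint eigenspace
  have hmult : ∀ χ, W χ ≠ ⊥ → ∀ a b, χ (a * b) = χ a * χ b := by
    intro χ hne a b
    set p := W χ with hp
    set F : A → Module.End ℂ p := fun c => (f c).restrict (hWmaps c χ) with hF
    have hFmul : ∀ c d, F (c * d) = F c * F d := by
      intro c d
      ext x
      simp [hF, LinearMap.restrict_apply, Module.End.mul_apply, hmul c d]
      rfl
    have hnilF : ∀ c, IsNilpotent (F c - algebraMap ℂ (Module.End ℂ p) (χ c)) := by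
      intro c
      have h' : Set.MapsTo (f c - algebraMap ℂ (Module.End ℂ V) (χ c)) p p := fun x hx => by
        simpa [Module.algebraMap_end_apply] using p.sub_mem (hWmaps c χ hx) (p.smul_mem (χ c) hx)
      have heq : F c - algebraMap ℂ (Module.End ℂ p) (χ c)
          = (f c - algebraMap ℂ (Module.End ℂ V) (χ c)).restrict h' := by
        ext x; simp [hF, LinearMap.restrict_apply, Module.algebraMap_end_apply]
        rfl
      rw [heq]
      exact Module.End.isNilpotent_restrict_of_le (iInf_le _ c)
        ((f c).isNilpotent_restrict_maxGenEigenspace_sub_algebraMap (χ c))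
    have hc : Commute (F a) (F b) := by
      rw [Commute, SemiconjBy, ← hFmul, ← hFmul, mul_comm a b]
    haveI : Nontrivial p := Submodule.nontrivial_iff_ne_bot.mpr hne
    refine comm_eigenvalue_mul (F a) (F b) hc (χ a) (χ b) (χ (a * b)) (hnilF a) (hnilF b) ?_
    rw [← hFmul]
    exact hnilF (a * b)
  -- trace computation
  have htr : ∀ a, LinearMap.trace ℂ V (f a)
      = ∑ χ ∈ hfin.toFinset, (Module.finrank ℂ (W χ) : ℂ) * χ a := by
    intro a
    rw [LinearMap.trace_eq_sum_trace_restrict' internal hfin (fun χ => hWmaps a χ)]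
    exact Finset.sum_congr rfl fun χ _ =>
      trace_restrict_genEig (f a) (χ a) (W χ) (iInf_le _ a) _
  have htrM : ∀ a, (T a).trace = LinearMap.trace ℂ V (f a) := by
    intro a
    rw [LinearMap.trace_eq_matrix_trace ℂ (Pi.basisFun ℂ (Fin N)) (f a),
      LinearMap.toMatrix_eq_toMatrix']
    show (T a).trace = (LinearMap.toMatrix' (Matrix.toLin' (T a))).trace
    rw [LinearMap.toMatrix'_toLin']
  -- build the functions η
  haveI := hfin.fintype
  let tt := {χ : A → ℂ // W χ ≠ ⊥}
  haveI : Fintype tt := hfin.fintype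
  have internal' : DirectSum.IsInternal (fun χ : tt => W χ.1) :=
    DirectSum.isInternal_ne_bot_iff.mpr internal
  let bb : ∀ χ : tt, Basis (Fin (Module.finrank ℂ (W χ.1))) ℂ (W χ.1) :=
    fun χ => Module.finBasis ℂ (W χ.1)
  have hcard : Fintype.card (Σ χ : tt, Fin (Module.finrank ℂ (W χ.1))) = N := by
    have h1 := Module.finrank_eq_card_basis (internal'.collectedBasis bb)
    have h2 : Module.finrank ℂ V = N := by
      show Module.finrank ℂ (Fin N → ℂ) = N
      rw [Module.finrank_pi, Fintype.card_fin]
    rw [h1] at h2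
    exact h2
  let e : (Σ χ : tt, Fin (Module.finrank ℂ (W χ.1))) ≃ Fin N := Fintype.equivFinOfCardEq hcard
  refine ⟨fun j => (e.symm j).1.1, fun j a b => hmult _ (e.symm j).1.2 a b, ?_⟩
  intro a
  rw [htrM a, htr a]
  have hsum1 : ∑ j : Fin N, (e.symm j).1.1 a
      = ∑ q : (Σ χ : tt, Fin (Module.finrank ℂ (W χ.1))), q.1.1 a := by
    rw [← Equiv.sum_comp e (fun j => (e.symm j).1.1 a)]
    exact Finset.sum_congr rfl fun q _ => by rw [Equiv.symm_apply_apply]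
  have hsum2 : ∑ q : (Σ χ : tt, Fin (Module.finrank ℂ (W χ.1))), q.1.1 a
      = ∑ χ : tt, (Module.finrank ℂ (W χ.1) : ℂ) * χ.1 a := by
    rw [← Finset.univ_sigma_univ, Finset.sum_sigma]
    simp [Finset.sum_const, nsmul_eq_mul]
  have hsum3 : ∑ χ : tt, (Module.finrank ℂ (W χ.1) : ℂ) * χ.1 a
      = ∑ χ ∈ hfin.toFinset, (Module.finrank ℂ (W χ) : ℂ) * χ a := by
    rw [← Finset.sum_coe_sort hfin.toFinset (fun χ => (Module.finrank ℂ (W χ) : ℂ) * χ a)]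
    exact Fintype.sum_equiv (Equiv.subtypeEquivRight (by simp)) _ _ (fun χ => rfl)
  rw [hsum1, hsum2, hsum3]
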